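/- For the Farey map F and the operator F̂ defined on functions by (F̂f)(x) = (f(x/(1+x)) + x·f(1/(1+x)))/(1+x), and for every f ∈ L¹(μ) and every Borel set B ⊆ [0,1], one has ∫_B (F̂f) dμ = ∫_{F⁻¹(B)} f dμ, where dμ = dx/x. -/

import Mathlib

open MeasureTheory

noncomputable def farey (x : ℝ) : ℝ := if x ≤ 1/2 then x / (1 - x) else (1 - x) / x

noncomputable def fareyMeasure : Measure ℝ :=
  (volume.restrict (Set.Icc (0:ℝ) 1)).withDensity (fun x => ENNReal.ofReal (1 / x))

noncomputable def fareyHat (f : ℝ → ℝ) (x : ℝ) : ℝ :=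
  (f (x / (1 + x)) + x * f (1 / (1 + x))) / (1 + x)

open Set

lemma farey_measurable : Measurable farey := by
  unfold farey
  exact Measurable.ite (measurableSet_le measurable_id measurable_const)
    (measurable_id.div (measurable_const.sub measurable_id))
    ((measurable_const.sub measurable_id).div measurable_id)

theorem transfer_operator_duality (f : ℝ → ℝ) (hf : Integrable f fareyMeasure)
    (B : Set ℝ) (hB : MeasurableSet B) (hB1 : B ⊆ Set.Icc (0:ℝ) 1) :
    ∫ x in B, fareyHat f x ∂fareyMeasure = ∫ x in farey ⁻¹' B, f x ∂fareyMeasure := by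
  classical
  set w : ℝ → NNReal := fun x => (1/x).toNNReal with hw
  have hwm : Measurable w := (measurable_const.div measurable_id).real_toNNReal
  have hμ : fareyMeasure
      = (volume.restrict (Set.Icc (0:ℝ) 1)).withDensity (fun x => ((w x : ENNReal))) := rfl
  set g0 : ℝ → ℝ := fun y => y / (1 + y) with hg0def
  set g1 : ℝ → ℝ := fun y => 1 / (1 + y) with hg1def
  set S0 : Set ℝ := Icc (0:ℝ) (1/2) ∩ (fun x => x / (1 - x)) ⁻¹' B with hS0def
  set S1 : Set ℝ := Ioc (1/2 : ℝ) 1 ∩ (fun x => (1 - x) / x) ⁻¹' B with hS1def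
  have hS0m : MeasurableSet S0 :=
    measurableSet_Icc.inter ((measurable_id.div (measurable_const.sub measurable_id)) hB)
  have hS1m : MeasurableSet S1 :=
    measurableSet_Ioc.inter (((measurable_const.sub measurable_id).div measurable_id) hB)
  -- the preimage decomposition
  have hdecomp : farey ⁻¹' B ∩ Icc (0:ℝ) 1 = S0 ∪ S1 := by
    ext x
    simp only [mem_inter_iff, mem_preimage, mem_union, hS0def, hS1def, mem_Icc, mem_Ioc]
    constructor
    · rintro ⟨hxB, hx0, hx1⟩
      by_cases h : x ≤ 1/2
      · left; exact ⟨⟨hx0, h⟩, by rwa [farey, if_pos h] at hxB⟩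
      · right; exact ⟨⟨lt_of_not_ge h, hx1⟩, by rwa [farey, if_neg h] at hxB⟩
    · rintro (⟨⟨hx0, hx2⟩, hxB⟩ | ⟨⟨hx2, hx1⟩, hxB⟩)
      · exact ⟨by rw [farey, if_pos hx2]; exact hxB, hx0, le_trans hx2 (by norm_num)⟩
      · exact ⟨by rw [farey, if_neg (not_le.2 hx2)]; exact hxB, by linarith, hx1⟩
  have hne : ∀ y ∈ B, (0:ℝ) < 1 + y := fun y hy => by
    have := (hB1 hy).1; linarith
  -- image identities
  have himg0 : g0 '' B = S0 := by
    ext x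
    constructor
    · rintro ⟨y, hy, rfl⟩
      have hy0 := (hB1 hy).1
      have hy1 := (hB1 hy).2
      have h1y : (0:ℝ) < 1 + y := by linarith
      have e2 : 1 - g0 y = 1/(1+y) := by rw [hg0def]; field_simp; ring
      refine ⟨⟨div_nonneg hy0 h1y.le, ?_⟩, ?_⟩
      · show g0 y ≤ 1/2
        rw [hg0def]
        simp only
        rw [div_le_div_iff₀ h1y (by norm_num : (0:ℝ) < 2)]
        linarith
      · show g0 y / (1 - g0 y) ∈ B
        have e3 : g0 y / (1/(1+y)) = y := by
          rw [hg0def]; field_simp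
        rw [e2, e3]; exact hy
    · rintro ⟨⟨hx0, hx2⟩, hxB⟩
      have h1x : (0:ℝ) < 1 - x := by linarith
      refine ⟨x/(1-x), hxB, ?_⟩
      show (x/(1-x))/(1 + x/(1-x)) = x
      have e2 : 1 + x/(1-x) = 1/(1-x) := by field_simp; ring
      rw [e2]
      field_simp
  have himg1a : S1 ⊆ g1 '' B := by
    rintro x ⟨⟨hx2, hx1⟩, hxB⟩
    have hx0 : (0:ℝ) < x := by linarith
    refine ⟨(1-x)/x, hxB, ?_⟩
    show 1/(1 + (1-x)/x) = x
    have e2 : 1 + (1-x)/x = 1/x := by field_simp; ring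
    rw [e2, one_div_one_div]
  have himg1b : g1 '' B \ S1 ⊆ {(1/2 : ℝ)} := by
    rintro x ⟨⟨y, hy, rfl⟩, hnot⟩
    have hy0 := (hB1 hy).1
    have hy1 := (hB1 hy).2
    have h1y : (0:ℝ) < 1 + y := by linarith
    by_cases h : y = 1
    · subst h
      show g1 1 ∈ ({1/2} : Set ℝ)
      rw [hg1def]
      norm_num
    · exfalso
      apply hnot
      have hy1' : y < 1 := lt_of_le_of_ne hy1 h
      have e : (1 - g1 y) / g1 y = y := by
        rw [hg1def]
        field_simp; ring
      refine ⟨⟨?_, ?_⟩, ?_⟩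
      · show 1/2 < g1 y
        rw [hg1def]
        simp only
        rw [div_lt_div_iff₀ (by norm_num : (0:ℝ) < 2) h1y]
        linarith
      · show g1 y ≤ 1
        rw [hg1def]
        simp only
        rw [div_le_one h1y]
        linarith
      · show (1 - g1 y) / g1 y ∈ B
        rw [e]; exact hy
  have hS1ae : g1 '' B =ᵐ[volume] S1 := by
    rw [ae_eq_set]
    exact ⟨measure_mono_null himg1b Real.volume_singleton,
      by rw [diff_eq_empty.mpr himg1a]; exact measure_empty⟩
  -- derivatives
  have hd0 : ∀ y ∈ B, HasDerivWithinAt g0 (1/(1+y)^2) B y := by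
    intro y hy
    have h1y : (0:ℝ) < 1 + y := hne y hy
    have Hd : HasDerivAt (fun t : ℝ => 1 + t) 1 y := by
      simpa using (hasDerivAt_id y).const_add (1:ℝ)
    have H := (hasDerivAt_id y).div Hd h1y.ne'
    have He : (1 * (1 + y) - y * 1) / (1 + y)^2 = 1/(1+y)^2 := by
      congr 1; ring
    exact (He ▸ H).hasDerivWithinAt
  have hd1 : ∀ y ∈ B, HasDerivWithinAt g1 (-(1/(1+y)^2)) B y := by
    intro y hy
    have h1y : (0:ℝ) < 1 + y := hne y hy
    have Hd : HasDerivAt (fun t : ℝ => 1 + t) 1 y := by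
      simpa using (hasDerivAt_id y).const_add (1:ℝ)
    have H := (hasDerivAt_const y (1:ℝ)).div Hd h1y.ne'
    have He : (0 * (1 + y) - 1 * 1) / (1 + y)^2 = -(1/(1+y)^2) := by
      ring
    exact (He ▸ H).hasDerivWithinAt
  have hinj0 : Set.InjOn g0 B := by
    intro a ha b hb h
    have ha1 : (0:ℝ) < 1 + a := hne a ha
    have hb1 : (0:ℝ) < 1 + b := hne b hb
    rw [hg0def] at h
    simp only at h
    rw [div_eq_div_iff ha1.ne' hb1.ne'] at h
    nlinarith [h]
  have hinj1 : Set.InjOn g1 B := by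
    intro a ha b hb h
    have ha1 : (0:ℝ) < 1 + a := hne a ha
    have hb1 : (0:ℝ) < 1 + b := hne b hb
    rw [hg1def] at h
    simp only at h
    rw [div_eq_div_iff ha1.ne' hb1.ne'] at h
    linarith
  -- integrability
  set F : ℝ → ℝ := fun x => (w x : ℝ) * f x with hF
  have hFint : IntegrableOn F (Icc (0:ℝ) 1) volume := by
    have h1 := (integrable_withDensity_iff hwm.coe_nnreal_ennreal
      (Filter.Eventually.of_forall fun x => ENNReal.coe_lt_top)).mp hf
    simp only [ENNReal.coe_toReal] at h1
    simpa [hF, mul_comm, IntegrableOn] using h1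
  have hFS0 : IntegrableOn F S0 volume :=
    hFint.mono_set (fun x hx => ⟨hx.1.1, le_trans hx.1.2 (by norm_num)⟩)
  have hFS1 : IntegrableOn F S1 volume :=
    hFint.mono_set (fun x hx => ⟨by linarith [hx.1.1], hx.1.2⟩)
  have hFim0 : IntegrableOn F (g0 '' B) volume := by rw [himg0]; exact hFS0
  have hFim1 : IntegrableOn F (g1 '' B) volume := by
    refine hFint.mono_set ?_
    rintro x ⟨y, hy, rfl⟩
    have h1y : (0:ℝ) < 1 + y := hne y hy
    refine ⟨div_nonneg zero_le_one h1y.le, ?_⟩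
    show g1 y ≤ 1
    rw [hg1def]
    simp only
    rw [div_le_one h1y]
    linarith [(hB1 hy).1]
  have hi0 : IntegrableOn (fun y => |1/(1+y)^2| * F (g0 y)) B volume := by
    have := (integrableOn_image_iff_integrableOn_abs_deriv_smul hB hd0 hinj0 F).mp hFim0
    simpa [smul_eq_mul] using this
  have hi1 : IntegrableOn (fun y => |(-(1/(1+y)^2))| * F (g1 y)) B volume := by
    have := (integrableOn_image_iff_integrableOn_abs_deriv_smul hB hd1 hinj1 F).mp hFim1
    simpa [smul_eq_mul] using this
  -- change of variables
  have h0' : ∫ x in S0, F x = ∫ y in B, |1/(1+y)^2| * F (g0 y) := by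
    rw [← himg0]
    simpa [smul_eq_mul] using integral_image_eq_integral_abs_deriv_smul hB hd0 hinj0 F
  have h1' : ∫ x in S1, F x = ∫ y in B, |(-(1/(1+y)^2))| * F (g1 y) := by
    rw [← setIntegral_congr_set hS1ae]
    simpa [smul_eq_mul] using integral_image_eq_integral_abs_deriv_smul hB hd1 hinj1 F
  -- rewriting both sides through the density
  have hLHS : ∫ x in B, fareyHat f x ∂fareyMeasure
      = ∫ x in B, (w x : ℝ) * fareyHat f x := by
    rw [hμ, setIntegral_withDensity_eq_setIntegral_smul hwm _ hB,
      Measure.restrict_restrict hB, Set.inter_eq_left.mpr hB1]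
    simp only [NNReal.smul_def, smul_eq_mul]
  have hTm : MeasurableSet (farey ⁻¹' B) := farey_measurable hB
  have hRHS : ∫ x in farey ⁻¹' B, f x ∂fareyMeasure
      = ∫ x in farey ⁻¹' B ∩ Icc (0:ℝ) 1, F x := by
    rw [hμ, setIntegral_withDensity_eq_setIntegral_smul hwm _ hTm,
      Measure.restrict_restrict hTm]
    simp only [NNReal.smul_def, smul_eq_mul, hF]
  -- disjoint union
  have hdisj : Disjoint S0 S1 := by
    rw [Set.disjoint_left]
    rintro x ⟨hx1, _⟩ ⟨hx2, _⟩
    exact absurd hx1.2 (not_le.2 hx2.1)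
  have hsplit : ∫ x in S0 ∪ S1, F x = (∫ x in S0, F x) + ∫ x in S1, F x :=
    setIntegral_union hdisj hS1m hFS0 hFS1
  -- pointwise a.e. identity on B
  have hae : ∀ᵐ y ∂(volume.restrict B),
      |1/(1+y)^2| * F (g0 y) + |(-(1/(1+y)^2))| * F (g1 y)
        = (w y : ℝ) * fareyHat f y := by
    have hne0 : ∀ᵐ (y:ℝ) ∂volume, y ≠ 0 := by
      have hs : {y : ℝ | ¬ y ≠ 0} = {0} := by ext y; simp
      rw [ae_iff, hs]
      exact Real.volume_singleton
    filter_upwards [ae_restrict_mem hB,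
      hne0.filter_mono (ae_mono Measure.restrict_le_self)] with y hyB hy0
    have hy0' : (0:ℝ) < y := lt_of_le_of_ne (hB1 hyB).1 (Ne.symm hy0)
    have h1y : (0:ℝ) < 1 + y := by linarith
    have e1 : ((w y : ℝ)) = 1/y := Real.coe_toNNReal _ (by positivity)
    have eg0 : g0 y = y/(1+y) := by rw [hg0def]
    have eg1 : g1 y = 1/(1+y) := by rw [hg1def]
    have e2 : ((w (g0 y) : ℝ)) = (1+y)/y := by
      rw [hw]
      simp only
      rw [Real.coe_toNNReal _ (by rw [eg0]; positivity), eg0, one_div_div]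
    have e3 : ((w (g1 y) : ℝ)) = 1+y := by
      rw [hw]
      simp only
      rw [Real.coe_toNNReal _ (by rw [eg1]; positivity), eg1, one_div_one_div]
    rw [hF]
    simp only
    rw [e1, e2, e3, eg0, eg1, abs_neg, abs_of_pos (by positivity : (0:ℝ) < 1/(1+y)^2)]
    rw [fareyHat]
    field_simp
  calc ∫ x in B, fareyHat f x ∂fareyMeasure
      = ∫ x in B, (w x : ℝ) * fareyHat f x := hLHS
    _ = ∫ y in B, (|1/(1+y)^2| * F (g0 y) + |(-(1/(1+y)^2))| * F (g1 y)) :=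
        (integral_congr_ae hae).symm
    _ = (∫ y in B, |1/(1+y)^2| * F (g0 y)) + ∫ y in B, |(-(1/(1+y)^2))| * F (g1 y) :=
        integral_add hi0 hi1
    _ = (∫ x in S0, F x) + ∫ x in S1, F x := by rw [h0', h1']
    _ = ∫ x in S0 ∪ S1, F x := hsplit.symm
    _ = ∫ x in farey ⁻¹' B ∩ Icc (0:ℝ) 1, F x := by rw [hdecomp]
    _ = ∫ x in farey ⁻¹' B, f x ∂fareyMeasure := hRHS.symm
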